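/- Let G be a simple graph on Fin k (k ≥ 2) with at least one edge (not necessarily connected), with maximum degree Δ ≥ 1, and let P : Fin k → ℝ be a probability vector with P i > 0 for all i and ∑ i, P i = 1. Define B_G(P) as the k×k real symmetric matrix with B_G(P)_ii = (1/Δ) · ( ∑_{j ∈ N_G(i)} (P j − P i)/(P i + P j) + (deg_G(i) − Δ) ), B_G(P)_ij = −2√(P i · P j)/(Δ (P i + P j)) on edges of G, and 0 otherwise. Then B_G(P) · v(P) = −v(P) where v(P)_i = √(P i), and every eigenvalue λ of B_G(P) satisfies λ ≥ −1 (equivalently, B_G(P) + I is positive semidefinite); that is, v(P) is a ground state of B_G(P) with energy −1, though not necessarily unique. -/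

import Mathlib

open Matrix Finset

/-- Let `G` be a simple graph on `Fin k` (`k ≥ 2`) with at
least one edge (not necessarily connected), with maximum degree `Δ ≥ 1`, and
`P` a positive probability vector.  The degree-corrected warm-started XY-mixer
`B_G(P)` satisfies `B_G(P)·v(P) = -v(P)` (with `v(P) i = √(P i)`), every
eigenvalue `λ` of `B_G(P)` satisfies `λ ≥ -1`, and equivalently `B_G(P) + I`
is positive semidefinite: `v(P)` is a ground state with energy `-1`, though
not necessarily unique. -/
theorem statement8 (k : ℕ) (hk : 2 ≤ k)
    (G : SimpleGraph (Fin k)) [DecidableRel G.Adj]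
    (hedge : ∃ a b : Fin k, G.Adj a b) (hΔ : 1 ≤ G.maxDegree)
    (P : Fin k → ℝ) (hpos : ∀ i, 0 < P i) (hsum : ∑ i, P i = 1)
    (B : Matrix (Fin k) (Fin k) ℝ)
    (hB : ∀ i j, B i j =
      if i = j then
        (1 / (G.maxDegree : ℝ)) *
          ((∑ l ∈ G.neighborFinset i, (P l - P i) / (P i + P l))
            + ((G.degree i : ℝ) - (G.maxDegree : ℝ)))
      else if G.Adj i j then
        -2 * Real.sqrt (P i * P j) / ((G.maxDegree : ℝ) * (P i + P j))
      else 0)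
    (v : Fin k → ℝ) (hv : ∀ i, v i = Real.sqrt (P i)) :
    B.mulVec v = -v ∧
    (∀ μ : ℝ, ∀ x : Fin k → ℝ, x ≠ 0 → B.mulVec x = μ • x → -1 ≤ μ) ∧
    (B + 1).PosSemidef := by
  have hΔR : (0:ℝ) < (G.maxDegree : ℝ) := by exact_mod_cast hΔ
  have hΔ0 : (G.maxDegree : ℝ) ≠ 0 := ne_of_gt hΔR
  have hPij : ∀ i j : Fin k, P i + P j ≠ 0 := fun i j =>
    ne_of_gt (add_pos (hpos i) (hpos j))
  have hsq : ∀ i, Real.sqrt (P i) ^ 2 = P i := fun i => Real.sq_sqrt (hpos i).le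
  -- diagonal entries of B + 1
  have hdiag : ∀ i, (B + 1) i i
      = (1/(G.maxDegree:ℝ)) * ∑ l ∈ G.neighborFinset i, 2 * P l / (P i + P l) := by
    intro i
    have h1 : (∑ l ∈ G.neighborFinset i, (P l - P i) / (P i + P l)) + (G.degree i : ℝ)
        = ∑ l ∈ G.neighborFinset i, 2 * P l / (P i + P l) := by
      rw [← G.card_neighborFinset_eq_degree, Finset.card_eq_sum_ones, Nat.cast_sum,
        ← Finset.sum_add_distrib]
      refine Finset.sum_congr rfl fun l _ => ?_
      have h := hPij i l
      push_cast
      field_simp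
      ring
    simp only [Matrix.add_apply, Matrix.one_apply_eq, hB i i, if_pos rfl, ite_true]
    rw [← h1]
    field_simp
    ring
  -- off-diagonal entries of B + 1
  have hoff : ∀ i j, i ≠ j → (B + 1) i j =
      if G.Adj i j then
        -2 * Real.sqrt (P i * P j) / ((G.maxDegree:ℝ) * (P i + P j)) else 0 := by
    intro i j hij
    simp [Matrix.add_apply, Matrix.one_apply, hij, hB i j]
  -- row sums of (B+1) against any vector
  have hrow : ∀ (x : Fin k → ℝ) (i : Fin k), (∑ j, (B + 1) i j * x j)
      = (1/(G.maxDegree:ℝ)) * ∑ j ∈ G.neighborFinset i,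
          (2 * P j / (P i + P j) * x i
            - 2 * Real.sqrt (P i) * Real.sqrt (P j) / (P i + P j) * x j) := by
    intro x i
    have hsplit : ∀ j, (B + 1) i j * x j
        = (if j ∈ G.neighborFinset i then
            (-2 * Real.sqrt (P i * P j) / ((G.maxDegree:ℝ) * (P i + P j))) * x j else 0)
          + (if j = i then
              ((1/(G.maxDegree:ℝ)) * ∑ l ∈ G.neighborFinset i, 2 * P l / (P i + P l)) * x i
              else 0) := by
      intro j
      by_cases hji : j = i
      · subst hji
        simp [G.notMem_neighborFinset_self, hdiag j]
      · rw [hoff i j (fun h => hji h.symm)]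
        by_cases hadj : G.Adj i j
        · simp [hadj, G.mem_neighborFinset, hji]
        · simp [hadj, G.mem_neighborFinset, hji]
    rw [Finset.sum_congr rfl fun j _ => hsplit j, Finset.sum_add_distrib]
    rw [Finset.sum_ite_eq' Finset.univ i
      (fun _ => ((1/(G.maxDegree:ℝ)) * ∑ l ∈ G.neighborFinset i, 2 * P l / (P i + P l)) * x i)]
    simp only [Finset.mem_univ, if_pos]
    rw [Finset.sum_ite_mem, Finset.univ_inter]
    have expand : (1 / (G.maxDegree:ℝ) * ∑ l ∈ G.neighborFinset i, 2 * P l / (P i + P l)) * x i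
        = ∑ l ∈ G.neighborFinset i, 1/(G.maxDegree:ℝ) * (2 * P l / (P i + P l)) * x i := by
      rw [Finset.mul_sum, Finset.sum_mul]
    rw [expand, Finset.mul_sum, ← Finset.sum_add_distrib]
    refine Finset.sum_congr rfl fun j hj => ?_
    rw [Real.sqrt_mul (hpos i).le]
    have h1 := hPij i j
    field_simp
    ring
  -- (B+1) v = 0
  have hvzero : (B + 1).mulVec v = 0 := by
    funext i
    rw [Matrix.mulVec, dotProduct]
    show (∑ j, (B + 1) i j * v j) = 0
    rw [hrow v i]
    rw [Finset.sum_eq_zero, mul_zero]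
    intro j hj
    rw [hv i, hv j]
    have h1 := hPij i j
    have h2 : Real.sqrt (P j) * Real.sqrt (P j) = P j := by
      rw [← Real.sqrt_mul (hpos j).le, Real.sqrt_mul_self (hpos j).le]
    field_simp
    linear_combination (-2 : ℝ) * Real.sqrt (P i) * hsq j
  have hBv : B.mulVec v = -v := by
    have := hvzero
    rw [Matrix.add_mulVec, Matrix.one_mulVec] at this
    funext i
    have := congrFun this i
    simp only [Pi.add_apply, Pi.zero_apply, Pi.neg_apply] at this ⊢
    linarith
  -- helper: swapping the summation over directed edges
  have hswap : ∀ F : Fin k → Fin k → ℝ,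
      (∑ i, ∑ j ∈ G.neighborFinset i, F i j) = ∑ i, ∑ j ∈ G.neighborFinset i, F j i := by
    intro F
    have key : ∀ F : Fin k → Fin k → ℝ,
        (∑ i, ∑ j ∈ G.neighborFinset i, F i j)
          = ∑ i, ∑ j, if G.Adj i j then F i j else 0 := by
      intro F
      refine Finset.sum_congr rfl fun i _ => ?_
      rw [SimpleGraph.neighborFinset_eq_filter, Finset.sum_filter]
    rw [key F, key (fun i j => F j i)]
    rw [Finset.sum_comm]
    refine Finset.sum_congr rfl fun i _ => Finset.sum_congr rfl fun j _ => ?_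
    by_cases h : G.Adj i j
    · simp [h, h.symm]
    · have h' : ¬ G.Adj j i := fun h' => h (G.adj_symm h')
      simp [h, h']
  -- positivity of the quadratic form
  have hquad : ∀ x : Fin k → ℝ, 0 ≤ x ⬝ᵥ (B + 1).mulVec x := by
    intro x
    have hform : x ⬝ᵥ (B + 1).mulVec x
        = (1/(G.maxDegree:ℝ)) * ∑ i, ∑ j ∈ G.neighborFinset i,
            (2 * P j / (P i + P j) * (x i * x i)
              - 2 * Real.sqrt (P i) * Real.sqrt (P j) / (P i + P j) * (x i * x j)) := by
      rw [dotProduct]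
      rw [Finset.mul_sum]
      refine Finset.sum_congr rfl fun i _ => ?_
      have : (B + 1).mulVec x i = ∑ j, (B + 1) i j * x j := rfl
      rw [this, hrow x i, mul_left_comm, Finset.mul_sum]
      refine congrArg _ (Finset.sum_congr rfl fun j _ => ?_)
      ring
    rw [hform]
    apply mul_nonneg (by positivity)
    set F : Fin k → Fin k → ℝ := fun i j =>
      2 * P j / (P i + P j) * (x i * x i)
        - 2 * Real.sqrt (P i) * Real.sqrt (P j) / (P i + P j) * (x i * x j) with hF
    have hsum2 : (∑ i, ∑ j ∈ G.neighborFinset i, F i j) * 2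
        = ∑ i, ∑ j ∈ G.neighborFinset i, (F i j + F j i) := by
      have h1 : (∑ i, ∑ j ∈ G.neighborFinset i, (F i j + F j i))
          = (∑ i, ∑ j ∈ G.neighborFinset i, F i j)
            + ∑ i, ∑ j ∈ G.neighborFinset i, F j i := by
        rw [← Finset.sum_add_distrib]
        exact Finset.sum_congr rfl fun i _ => Finset.sum_add_distrib
      rw [h1, ← hswap F]
      ring
    have hterm : ∀ i j : Fin k, F i j + F j i
        = 2 * (Real.sqrt (P j) * x i - Real.sqrt (P i) * x j)^2 / (P i + P j) := by
      intro i j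
      have h1 := hPij i j
      have h2 : P i + P j = P j + P i := by ring
      rw [hF]
      simp only []
      rw [← hsq i, ← hsq j]
      simp only [Real.sqrt_sq (Real.sqrt_nonneg (P i)), Real.sqrt_sq (Real.sqrt_nonneg (P j))]
      field_simp
      ring
    have hnn : 0 ≤ ∑ i, ∑ j ∈ G.neighborFinset i, (F i j + F j i) := by
      refine Finset.sum_nonneg fun i _ => Finset.sum_nonneg fun j _ => ?_
      rw [hterm i j]
      exact div_nonneg (by positivity) (add_pos (hpos i) (hpos j)).le
    nlinarith [hsum2, hnn]
  have hpsd : (B + 1).PosSemidef := by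
    rw [Matrix.posSemidef_iff_dotProduct_mulVec]
    constructor
    · -- hermitian
      have hBsym : B.IsHermitian := by
        ext i j
        simp only [Matrix.conjTranspose_apply, star_trivial]
        rw [hB i j, hB j i]
        by_cases hij : i = j
        · subst hij; simp
        · have hji : ¬ j = i := fun h => hij h.symm
          rw [if_neg hji, if_neg hij]
          by_cases hadj : G.Adj i j
          · rw [if_pos hadj, if_pos (G.adj_symm hadj)]
            rw [mul_comm (P j) (P i), add_comm (P j) (P i)]
          · rw [if_neg hadj, if_neg (fun h => hadj (G.adj_symm h))]
      exact hBsym.add Matrix.isHermitian_one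
    · intro x
      simpa using hquad x
  refine ⟨hBv, fun μ x hx hμ => ?_, hpsd⟩
  have hxx : 0 < x ⬝ᵥ x := by
    rw [dotProduct]
    obtain ⟨i, hi⟩ := Function.ne_iff.mp hx
    exact Finset.sum_pos' (fun j _ => mul_self_nonneg (x j))
      ⟨i, Finset.mem_univ i, mul_self_pos.mpr hi⟩
  have h0 := hquad x
  rw [Matrix.add_mulVec, Matrix.one_mulVec, hμ, dotProduct_add,
    dotProduct_smul] at h0
  have : 0 ≤ (μ + 1) * (x ⬝ᵥ x) := by
    rw [add_mul, one_mul]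
    simpa [smul_eq_mul] using h0
  nlinarith
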